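/- Let p be a prime, A = (ℤ_p)^k with k ≥ 1, and T the caterpillar C(h₁, h₂, h₃) with three spine vertices carrying h₁, h₂, h₃ pendant leaves respectively. If h₁ ≡ 0 (mod p), h₂ ≡ p−2 (mod p), and h₃ ≡ p−1 (mod p), then T has no A-rainbow labeling. -/

import Mathlib

/-- Edge-label function of the caterpillar `C(h₁,h₂,h₃)` induced by a vertex labeling `f`.
The vertices are the three spine vertices (`Fin 3`) together with the pendant leaves;
the edges are the two spine edges (`Fin 2`) together with the pendant edges. -/
def catLabel {A : Type*} [AddCommGroup A] {h₁ h₂ h₃ : ℕ}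
    (f : Fin 3 ⊕ (Fin h₁ ⊕ Fin h₂ ⊕ Fin h₃) → A) :
    Fin 2 ⊕ (Fin h₁ ⊕ Fin h₂ ⊕ Fin h₃) → A
  | .inl i => f (.inl i.castSucc) + f (.inl i.succ)
  | .inr (.inl j) => f (.inl 0) + f (.inr (.inl j))
  | .inr (.inr (.inl j)) => f (.inl 1) + f (.inr (.inr (.inl j)))
  | .inr (.inr (.inr j)) => f (.inl 2) + f (.inr (.inr (.inr j)))

/-- The caterpillar `C(h₁,h₂,h₃)` has an `A`-rainbow labeling: a bijective vertex
labeling by the elements of `A` whose induced edge labels are pairwise distinct. -/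
def IsRainbowCat (h₁ h₂ h₃ : ℕ) (A : Type*) [AddCommGroup A] : Prop :=
  ∃ f : Fin 3 ⊕ (Fin h₁ ⊕ Fin h₂ ⊕ Fin h₃) → A,
    Function.Bijective f ∧ Function.Injective (catLabel f)

theorem stmt2 (p k : ℕ) (hp : p.Prime) (hk : 1 ≤ k) (h₁ h₂ h₃ : ℕ)
    (horder : h₁ + h₂ + h₃ + 3 = p ^ k)
    (hh₁ : h₁ % p = 0) (hh₂ : h₂ % p = p - 2) (hh₃ : h₃ % p = p - 1) :
    ¬ IsRainbowCat h₁ h₂ h₃ (Fin k → ZMod p) := by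
  haveI : NeZero p := ⟨hp.pos.ne'⟩
  rintro ⟨f, hbij, hinj⟩
  classical
  set g := catLabel f with hg
  set a := f (.inl 0) with ha
  set b := f (.inl 1) with hb
  set c := f (.inl 2) with hc
  set s : Finset (Fin k → ZMod p) := Finset.univ.image g with hs
  have hcardA : Fintype.card (Fin k → ZMod p) = h₁ + h₂ + h₃ + 3 := by
    simp [ZMod.card, horder]
  have hcard_s : s.card = 2 + (h₁ + (h₂ + h₃)) := by
    rw [hs, Finset.card_image_of_injective _ hinj, Finset.card_univ]
    simp
  have hsdiff : (Finset.univ \ s).card = 1 := by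
    rw [Finset.card_sdiff_of_subset (Finset.subset_univ s), Finset.card_univ, hcardA, hcard_s]; omega
  obtain ⟨m, hm⟩ := Finset.card_eq_one.mp hsdiff
  have hmnot : m ∉ s := by
    have : m ∈ Finset.univ \ s := hm ▸ Finset.mem_singleton_self m
    exact (Finset.mem_sdiff.mp this).2
  have hsum : (∑ x : Fin k → ZMod p, x) = m + ∑ e, g e := by
    have h1 := Finset.sum_sdiff (f := fun x : Fin k → ZMod p => x) (Finset.subset_univ s)
    rw [hm, Finset.sum_singleton] at h1
    rw [← h1, Finset.sum_image (fun x _ y _ h => hinj h)]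
  -- smul facts
  have cast2 : ((h₂ : ZMod p)) = -2 := by
    rw [← ZMod.natCast_mod, hh₂, Nat.cast_sub hp.two_le, ZMod.natCast_self]
    ring
  have cast1 : ((h₁ : ZMod p)) = 0 := by
    rw [← ZMod.natCast_mod, hh₁, Nat.cast_zero]
  have cast3 : ((h₃ : ZMod p)) = -1 := by
    rw [← ZMod.natCast_mod, hh₃, Nat.cast_sub hp.one_le, ZMod.natCast_self]
    ring
  have sm1 : h₁ • a = 0 := by
    rw [← Nat.cast_smul_eq_nsmul (ZMod p), cast1, zero_smul]
  have sm2 : h₂ • b = -(b + b) := by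
    rw [← Nat.cast_smul_eq_nsmul (ZMod p), cast2]
    module
  have sm3 : h₃ • c = -c := by
    rw [← Nat.cast_smul_eq_nsmul (ZMod p), cast3]
    module
  -- vertex sum
  have hvert : (∑ x : Fin k → ZMod p, x) = ∑ v, f v :=
    (Fintype.sum_bijective f hbij _ id (fun _ => rfl)).symm
  have hvert2 : (∑ x : Fin k → ZMod p, x) = a + b + c +
      ((∑ j, f (.inr (.inl j))) + ((∑ j, f (.inr (.inr (.inl j)))) + ∑ j, f (.inr (.inr (.inr j))))) := by
    rw [hvert, Fintype.sum_sum_type, Fintype.sum_sum_type, Fintype.sum_sum_type,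
      Fin.sum_univ_three]
  -- edge sum
  have hedge : (∑ e, g e) = (a + b) + (b + c) +
      ((h₁ • a + ∑ j, f (.inr (.inl j))) + ((h₂ • b + ∑ j, f (.inr (.inr (.inl j)))) +
        (h₃ • c + ∑ j, f (.inr (.inr (.inr j)))))) := by
    rw [Fintype.sum_sum_type, Fintype.sum_sum_type, Fintype.sum_sum_type, Fin.sum_univ_two]
    simp [hg, catLabel, Finset.sum_add_distrib, Finset.card_univ, ← ha, ← hb, ← hc]
  have hm_eq : m = b + c := by
    have := hsum
    rw [hedge, hvert2, sm1, sm2, sm3] at this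
    have := this
    linear_combination (norm := abel) -this
  have : g (.inl 1) = b + c := by
    show f (.inl (1 : Fin 2).castSucc) + f (.inl (1 : Fin 2).succ) = b + c
    norm_num [hb, hc]
  exact hmnot (hm_eq ▸ this ▸ Finset.mem_image_of_mem g (Finset.mem_univ (.inl 1 : Fin 2 ⊕ (Fin h₁ ⊕ Fin h₂ ⊕ Fin h₃))))
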